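/- (Bar Lemma) Let R be a commutative ring with an ultrametric norm ‖·‖ bounded by 1, fix ρ ∈ (0,1], and let f ∈ HahnSeries ℝ≥0 R be nonzero. Then for every ε > 0 there exists δ > 0 such that every index j in the support of f with j ≤ argnorm f − ε satisfies ‖f.coeff j‖·ρ^j ≤ |f|_ρ − δ. -/
import Mathlib


open scoped NNReal

/-- The Gauss norm of radius `ρ` of a Hahn (Mal'cev–Neumann) series
`f = Σ aᵢ tⁱ ∈ HahnSeries ℝ≥0 R`, with respect to a norm `n` on `R`:
`|f|_ρ = sup_{i ∈ supp f} n(aᵢ)·ρ^i` (with `|0|_ρ = 0`, since `sSup ∅ = 0` in `ℝ`). -/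
noncomputable def gaussNorm {R : Type} [CommRing R] (n : R → ℝ) (ρ : ℝ)
    (f : HahnSeries ℝ≥0 R) : ℝ :=
  sSup ((fun i : ℝ≥0 => n (f.coeff i) * ρ ^ (i : ℝ)) '' f.support)

/-- The `argnorm` of a Hahn series `f`: the least index `i` at which the Gauss norm of
`f` is attained, or approached along a sequence of indices in the support of `f`
(`sInf` of the set of such indices; the infimum is attained by well-orderedness). -/
noncomputable def argnorm {R : Type} [CommRing R] (n : R → ℝ) (ρ : ℝ)
    (f : HahnSeries ℝ≥0 R) : ℝ≥0 :=
  sInf {i : ℝ≥0 |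
    n (f.coeff i) * ρ ^ (i : ℝ) = gaussNorm n ρ f ∨
    ∃ x : ℕ → ℝ≥0, (∀ k, x k ∈ f.support) ∧
      Filter.Tendsto x Filter.atTop (nhds i) ∧
      Filter.Tendsto (fun k => n (f.coeff (x k)) * ρ ^ ((x k : ℝ))) Filter.atTop
        (nhds (gaussNorm n ρ f))}


/-- Bar Lemma: for a nonzero Mal'cev–Neumann series
`f ∈ HahnSeries ℝ≥0 R` over a commutative ring `R` with an ultrametric norm bounded by
`1`, and `ρ ∈ (0,1]`: for every `ε > 0`, the terms of `f` of index at most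
`argnorm f − ε` have Gauss norm bounded away from `|f|_ρ`. -/
theorem gaussNorm_bar_lemma
    (R : Type) [CommRing R] (n : R → ℝ)
    (hnonneg : ∀ a : R, 0 ≤ n a)
    (hzero : ∀ a : R, n a = 0 ↔ a = 0)
    (hmul : ∀ a b : R, n (a * b) ≤ n a * n b)
    (hadd : ∀ a b : R, n (a + b) ≤ max (n a) (n b))
    (hbd : ∀ a : R, n a ≤ 1)
    (ρ : ℝ) (hρ : ρ ∈ Set.Ioc (0 : ℝ) 1)
    (f : HahnSeries ℝ≥0 R) (hf : f ≠ 0) :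
    ∀ ε : ℝ, 0 < ε → ∃ δ : ℝ, 0 < δ ∧
      ∀ j ∈ f.support, (j : ℝ) ≤ (argnorm n ρ f : ℝ) - ε →
        n (f.coeff j) * ρ ^ (j : ℝ) ≤ gaussNorm n ρ f - δ := by
  intro ε hε
  set g : ℝ≥0 → ℝ := fun i => n (f.coeff i) * ρ ^ (i : ℝ) with hg
  have hgle1 : ∀ i, g i ≤ 1 := fun i =>
    mul_le_one₀ (hbd _) (Real.rpow_nonneg hρ.1.le _)
      (Real.rpow_le_one hρ.1.le hρ.2 i.coe_nonneg)
  have hbdd : BddAbove (g '' f.support) := ⟨1, by rintro _ ⟨j, -, rfl⟩; exact hgle1 j⟩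
  have hGub : ∀ j ∈ f.support, g j ≤ gaussNorm n ρ f := fun j hj =>
    le_csSup hbdd ⟨j, hj, rfl⟩
  set S : Set ℝ≥0 := {j | j ∈ f.support ∧ (j : ℝ) ≤ (argnorm n ρ f : ℝ) - ε} with hS
  by_cases hSne : S.Nonempty
  · set c := sSup (g '' S) with hc
    have hbddS : BddAbove (g '' S) := ⟨1, by rintro _ ⟨j, -, rfl⟩; exact hgle1 j⟩
    have hcle : c ≤ gaussNorm n ρ f :=
      csSup_le (hSne.image g) (by rintro _ ⟨j, hj, rfl⟩; exact hGub j hj.1)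
    have hclt : c < gaussNorm n ρ f := by
      rcases lt_or_eq_of_le hcle with h | h
      · exact h
      exfalso
      obtain ⟨u, -, hut, hum⟩ := exists_seq_tendsto_sSup (hSne.image g) hbddS
      choose x hxS hgx using hum
      have hxb : ∀ k, (x k : ℝ) ∈ Set.Icc 0 ((argnorm n ρ f : ℝ) - ε) := fun k =>
        ⟨(x k).coe_nonneg, (hxS k).2⟩
      obtain ⟨a, ha, φ, hφ, hta⟩ := isCompact_Icc.tendsto_subseq hxb
      set i : ℝ≥0 := ⟨a, ha.1⟩ with hi
      have hti : Filter.Tendsto (fun k => x (φ k)) Filter.atTop (nhds i) :=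
        NNReal.tendsto_coe.mp hta
      have htg : Filter.Tendsto (fun k => g (x (φ k))) Filter.atTop
          (nhds (gaussNorm n ρ f)) := by
        have h2 : Filter.Tendsto (fun k => u (φ k)) Filter.atTop (nhds c) :=
          hut.comp hφ.tendsto_atTop
        rw [h] at h2
        have : (fun k => g (x (φ k))) = fun k => u (φ k) := funext fun k => hgx (φ k)
        rw [this]; exact h2
      have hiS : i ∈ {i : ℝ≥0 |
          n (f.coeff i) * ρ ^ (i : ℝ) = gaussNorm n ρ f ∨
          ∃ x : ℕ → ℝ≥0, (∀ k, x k ∈ f.support) ∧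
            Filter.Tendsto x Filter.atTop (nhds i) ∧
            Filter.Tendsto (fun k => n (f.coeff (x k)) * ρ ^ ((x k : ℝ))) Filter.atTop
              (nhds (gaussNorm n ρ f))} :=
        Or.inr ⟨fun k => x (φ k), fun k => (hxS (φ k)).1, hti, htg⟩
      have hle : argnorm n ρ f ≤ i := csInf_le (OrderBot.bddBelow _) hiS
      have hle' : (argnorm n ρ f : ℝ) ≤ a := hle
      have : a ≤ (argnorm n ρ f : ℝ) - ε := ha.2
      linarith
    refine ⟨gaussNorm n ρ f - c, by linarith, fun j hj hjle => ?_⟩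
    have : g j ≤ c := le_csSup hbddS ⟨j, ⟨hj, hjle⟩, rfl⟩
    simpa using this.trans_eq (by ring)
  · exact ⟨1, one_pos, fun j hj hjle => (hSne ⟨j, hj, hjle⟩).elim⟩
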